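/- If W is a positive-integer-valued random variable with finite mean, then its Shannon entropy in bits satisfies H(W) ≤ E[⌊log₂ W⌋] + log₂(1 + E[⌊log₂ W⌋]) + log₂ e. -/

import Mathlib

lemma gibbs_point (P Q : ℝ) (hP : 0 ≤ P) (hQ : 0 < Q) :
    -(P * Real.logb 2 P) ≤ -(P * Real.logb 2 Q) + (Q - P) / Real.log 2 := by
  have hlog2 : (0:ℝ) < Real.log 2 := Real.log_pos (by norm_num)
  rcases eq_or_lt_of_le hP with h | h
  · simp [← h]
    positivity
  · have hQP : 0 < Q / P := div_pos hQ h
    have h1 : Real.log (Q / P) ≤ Q / P - 1 := Real.log_le_sub_one_of_pos hQP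
    rw [Real.log_div hQ.ne' h.ne'] at h1
    have h2 : P * (Real.log Q - Real.log P) ≤ Q - P := by
      have h3 := mul_le_mul_of_nonneg_left h1 h.le
      have h4 : P * (Q/P - 1) = Q - P := by field_simp
      linarith
    have e1 : -(P * Real.logb 2 P) = (-(P * Real.log P)) / Real.log 2 := by
      rw [Real.logb]; ring
    have e2 : -(P * Real.logb 2 Q) + (Q - P) / Real.log 2
        = (-(P * Real.log Q) + (Q - P)) / Real.log 2 := by
      rw [Real.logb]; ring
    rw [e1, e2]
    apply div_le_div_of_nonneg_right ?_ hlog2.le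
    linarith

theorem entropy_le_mean_floor_log (p : ℕ → ℝ) (hnn : ∀ n, 0 ≤ p n) (h0 : p 0 = 0)
    (hsum : Summable p) (htot : ∑' n, p n = 1)
    (hmean : Summable fun n : ℕ => (n : ℝ) * p n) :
    ∑' n, -(p n * Real.logb 2 (p n)) ≤
      (∑' n, (Nat.log 2 n : ℝ) * p n) +
        Real.logb 2 (1 + ∑' n, (Nat.log 2 n : ℝ) * p n) +
        Real.logb 2 (Real.exp 1) := by
  have hlog2 : (0:ℝ) < Real.log 2 := Real.log_pos (by norm_num)
  have hlogbe : Real.logb 2 (Real.exp 1) = 1 / Real.log 2 := by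
    rw [Real.logb, Real.log_exp]
  have hLnn : ∀ n, 0 ≤ (Nat.log 2 n : ℝ) * p n := fun n =>
    mul_nonneg (Nat.cast_nonneg _) (hnn n)
  have hL : Summable (fun n : ℕ => (Nat.log 2 n : ℝ) * p n) := by
    apply Summable.of_nonneg_of_le hLnn (fun n => ?_) hmean
    exact mul_le_mul_of_nonneg_right (by exact_mod_cast Nat.log_le_self 2 n) (hnn n)
  set m := ∑' n, (Nat.log 2 n : ℝ) * p n with hm
  have hm0 : 0 ≤ m := tsum_nonneg hLnn
  have hp1 : ∀ n, p n ≤ 1 := by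
    intro n
    have := Summable.le_tsum hsum n (fun j _ => hnn j)
    rwa [htot] at this
  -- entropy terms are nonnegative
  have hent_nn : ∀ n, 0 ≤ -(p n * Real.logb 2 (p n)) := by
    intro n
    have : Real.logb 2 (p n) ≤ 0 := Real.logb_nonpos (by norm_num) (hnn n) (hp1 n)
    nlinarith [hnn n]
  rcases eq_or_lt_of_le hm0 with hm0' | hmpos
  · -- degenerate case m = 0
    have hterm0 : ∀ n, (Nat.log 2 n : ℝ) * p n = 0 := by
      intro n
      have h1 := Summable.le_tsum hL n (fun j _ => hLnn j)
      rw [← hm, ← hm0'] at h1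
      linarith [hLnn n]
    have hp2 : ∀ n, 2 ≤ n → p n = 0 := by
      intro n hn
      have hlp : 0 < Nat.log 2 n := Nat.log_pos (by norm_num) hn
      have := hterm0 n
      rcases mul_eq_zero.1 this with h | h
      · exact absurd h (by positivity)
      · exact h
    have hzero : ∀ n, -(p n * Real.logb 2 (p n)) = 0 := by
      intro n
      match n with
      | 0 => simp [h0]
      | 1 =>
        have hp1' : p 1 = 1 := by
          have := tsum_eq_single (L := SummationFilter.unconditional ℕ) (f := p) 1 (fun b hb => by
            match b with
            | 0 => exact h0
            | 1 => exact absurd rfl hb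
            | (k+2) => exact hp2 (k+2) (by omega))
          rw [htot] at this; exact this.symm
        simp [hp1']
      | (k+2) => simp [hp2 (k+2) (by omega)]
    calc ∑' n, -(p n * Real.logb 2 (p n)) = 0 := by
          simp only [hzero, tsum_zero]
      _ ≤ m + Real.logb 2 (1 + m) + Real.logb 2 (Real.exp 1) := by
          rw [← hm0']
          have h1 : (0:ℝ) ≤ Real.logb 2 (Real.exp 1) :=
            Real.logb_nonneg (by norm_num) (by nlinarith [Real.add_one_le_exp (1:ℝ)])
          simp [h1]
  · -- main case m > 0
    have h1m : (0:ℝ) < 1 + m := by linarith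
    set θ : ℝ := m / (1 + m) with hθ
    have hθpos : 0 < θ := div_pos hmpos h1m
    have hθlt1 : θ < 1 := by rw [hθ, div_lt_one h1m]; linarith
    have h1θ : 1 - θ = (1 + m)⁻¹ := by rw [hθ]; field_simp; ring
    have h1θpos : 0 < 1 - θ := by linarith
    set q : ℕ → ℝ := fun n => if n = 0 then 0 else (1 - θ) * (θ/2)^(Nat.log 2 n) with hq
    have hqnn : ∀ n, 0 ≤ q n := by
      intro n; rw [hq]; dsimp only
      split
      · exact le_refl 0
      · positivity
    -- block sums
    have hblock : ∀ L : ℕ, ∑ n ∈ Finset.Ico (2^L) (2^(L+1)), q n = (1 - θ) * θ^L := by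
      intro L
      have hconst : ∀ n ∈ Finset.Ico (2^L) (2^(L+1)), q n = (1 - θ) * (θ/2)^L := by
        intro n hn
        rw [Finset.mem_Ico] at hn
        have hn0 : n ≠ 0 := by
          have : 0 < 2^L := Nat.two_pow_pos L
          omega
        have hlog : Nat.log 2 n = L := Nat.log_eq_of_pow_le_of_lt_pow hn.1 hn.2
        rw [hq]; simp [hn0, hlog]
      rw [Finset.sum_congr rfl hconst, Finset.sum_const, Nat.card_Ico]
      have hcard : 2^(L+1) - 2^L = 2^L := by
        have : 2^(L+1) = 2 * 2^L := by ring
        omega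
      rw [hcard, nsmul_eq_mul]
      have h2L : ((2:ℝ))^L ≠ 0 := by positivity
      push_cast
      rw [div_pow]
      field_simp
    have hrange : ∀ L : ℕ, ∑ n ∈ Finset.range (2^L), q n = 1 - θ^L := by
      intro L
      induction L with
      | zero => simp [hq]
      | succ L ih =>
        rw [Finset.range_eq_Ico,
          ← Finset.sum_Ico_consecutive _ (Nat.zero_le (2^L))
            (Nat.pow_le_pow_right (by norm_num) (Nat.le_succ L)),
          ← Finset.range_eq_Ico, ih, hblock]
        ring
    have hrangele : ∀ N : ℕ, ∑ n ∈ Finset.range N, q n ≤ 1 := by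
      intro N
      calc ∑ n ∈ Finset.range N, q n
          ≤ ∑ n ∈ Finset.range (2^N), q n := by
            apply Finset.sum_le_sum_of_subset_of_nonneg
            · exact Finset.range_subset_range.2 Nat.lt_two_pow_self.le
            · exact fun i _ _ => hqnn i
        _ = 1 - θ^N := hrange N
        _ ≤ 1 := by nlinarith [pow_nonneg hθpos.le N]
    have hsq : Summable q := summable_of_sum_range_le hqnn hrangele
    have hQle : ∑' n, q n ≤ 1 := Real.tsum_le_of_sum_range_le hqnn hrangele
    -- the dominating function
    set A : ℝ := 1 - Real.logb 2 θ with hA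
    set B : ℝ := - Real.logb 2 (1 - θ) with hB
    set g : ℕ → ℝ := fun n =>
      (Nat.log 2 n : ℝ) * p n * A + p n * B + (q n - p n) / Real.log 2 with hg
    have hqpos : ∀ n : ℕ, n ≠ 0 → 0 < q n := by
      intro n hn
      rw [hq]; simp only [hn, if_false]
      positivity
    have hlogq : ∀ n : ℕ, n ≠ 0 →
        -(p n * Real.logb 2 (q n)) = (Nat.log 2 n : ℝ) * p n * A + p n * B := by
      intro n hn
      have hqeq : q n = (1 - θ) * (θ/2)^(Nat.log 2 n) := by rw [hq]; simp [hn]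
      rw [hqeq, Real.logb_mul h1θpos.ne' (by positivity), Real.logb_pow,
        Real.logb_div hθpos.ne' (by norm_num),
        Real.logb_self_eq_one (by norm_num : (1:ℝ) < 2), hA, hB]
      ring
    have hpoint : ∀ n : ℕ, -(p n * Real.logb 2 (p n)) ≤ g n := by
      intro n
      rcases eq_or_ne n 0 with rfl | hn
      · rw [hg]; simp [h0, hq]
      · have := gibbs_point (p n) (q n) (hnn n) (hqpos n hn)
        rw [hg]; dsimp only
        rw [← hlogq n hn]
        exact this
    -- summability
    have hs1 : Summable (fun n : ℕ => (Nat.log 2 n : ℝ) * p n * A) := hL.mul_right A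
    have hs2 : Summable (fun n : ℕ => p n * B) := hsum.mul_right B
    have hs3 : Summable (fun n : ℕ => (q n - p n) / Real.log 2) :=
      (hsq.sub hsum).div_const _
    have hsg : Summable g := (hs1.add hs2).add hs3
    have hse : Summable (fun n : ℕ => -(p n * Real.logb 2 (p n))) := by
      apply Summable.of_nonneg_of_le hent_nn (fun n => ?_)
        (hsg.add (hsum.div_const (Real.log 2)))
      have : g n ≤ g n + p n / Real.log 2 := by
        have : 0 ≤ p n / Real.log 2 := div_nonneg (hnn n) hlog2.le
        linarith
      exact (hpoint n).trans this
    have hmain : ∑' n, -(p n * Real.logb 2 (p n)) ≤ ∑' n, g n :=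
      Summable.tsum_le_tsum hpoint hse hsg
    have hgsum : ∑' n, g n = m * A + B + (∑' n, q n - 1) / Real.log 2 := by
      rw [hg]
      rw [Summable.tsum_add (hs1.add hs2) hs3, Summable.tsum_add hs1 hs2, tsum_mul_right, tsum_mul_right,
        tsum_div_const, Summable.tsum_sub hsq hsum, htot, ← hm]
      ring
    rw [hgsum] at hmain
    -- final estimates
    have hB' : B = Real.logb 2 (1 + m) := by
      rw [hB, h1θ, Real.logb_inv]; ring
    have hAm : m * A ≤ m + Real.logb 2 (Real.exp 1) := by
      have hinv : θ⁻¹ = (1 + m) / m := by rw [hθ, inv_div]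
      have hlogθ : - Real.logb 2 θ = Real.logb 2 ((1+m)/m) := by
        rw [← Real.logb_inv, hinv]
      have hpos : (0:ℝ) < (1+m)/m := by positivity
      have h1 : Real.log ((1+m)/m) ≤ (1+m)/m - 1 := Real.log_le_sub_one_of_pos hpos
      have h2 : (1+m)/m - 1 = 1/m := by field_simp; ring
      have h3 : m * Real.log ((1+m)/m) ≤ 1 := by
        have := mul_le_mul_of_nonneg_left h1 hmpos.le
        rw [h2] at this
        have : m * (1/m) = 1 := by field_simp
        nlinarith [Real.log_le_sub_one_of_pos hpos]
      have h4 : m * Real.logb 2 ((1+m)/m) ≤ 1 / Real.log 2 := by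
        rw [Real.logb, mul_div_assoc']
        exact div_le_div_of_nonneg_right h3 hlog2.le
      rw [hlogbe, hA]
      nlinarith [h4, hlogθ]
    have hQ0 : (∑' n, q n - 1) / Real.log 2 ≤ 0 :=
      div_nonpos_of_nonpos_of_nonneg (by linarith) hlog2.le
    calc ∑' n, -(p n * Real.logb 2 (p n))
        ≤ m * A + B + (∑' n, q n - 1) / Real.log 2 := hmain
      _ ≤ (m + Real.logb 2 (Real.exp 1)) + Real.logb 2 (1 + m) + 0 := by
          rw [← hB']
          gcongr
      _ = m + Real.logb 2 (1 + m) + Real.logb 2 (Real.exp 1) := by ring
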